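/- Every finite strongly Mal'cev nilpotent semigroup is a block group all of whose subgroups are nilpotent; moreover, the inclusion is strict: there exists a finite block group, all of whose subgroups are nilpotent, that is not strongly Mal'cev nilpotent. -/

import Mathlib

namespace SMN

variable {S : Type*}

/-- Mal'cev sequences `(λ_n, ρ_n)`; `z k` plays the role of `z_{k+1}`. -/
def lr [Mul S] (x y : S) (z : ℕ → S) : ℕ → S × S
  | 0 => (x, y)
  | n + 1 =>
    let p := lr x y z n
    (p.1 * z n * p.2, p.2 * z n * p.1)

/-- Cyclic shift by `k` in `Fin t`. -/
def cyc {t : ℕ} (i : Fin t) (k : ℕ) : Fin t :=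
  ⟨(i.val + k) % t, Nat.mod_lt _ i.pos⟩

/-- Strong Mal'cev sequences `λ_{n,i}`; `z k` plays the role of `z_{k+1}`. -/
def slam [Mul S] {t : ℕ} (x : Fin t → S) (z : ℕ → S) : ℕ → Fin t → S
  | 0 => x
  | n + 1 =>
    let f := slam x z n
    fun i => (List.range (t - 1)).foldl (fun acc j => acc * z n * f (cyc i (j + 1))) (f i)

/-- A semigroup is Mal'cev nilpotent if for some `n ≥ 1`,
`λ_n = ρ_n` for all `x, y ∈ S` and `z₁, …, z_n ∈ S¹`. -/
def MalcevNilpotent (S : Type*) [Semigroup S] : Prop :=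
  ∃ n : ℕ, 1 ≤ n ∧ ∀ (x y : S) (z : ℕ → WithOne S),
    (lr (x : WithOne S) (y : WithOne S) z n).1 = (lr (x : WithOne S) (y : WithOne S) z n).2

/-- Strong Mal'cev nilpotency at level `n`. -/
def SMNAt (S : Type*) [Semigroup S] (n : ℕ) : Prop :=
  ∀ t : ℕ, 2 ≤ t → ∀ (x : Fin t → S) (z : ℕ → WithOne S) (i j : Fin t),
    slam (fun k => (x k : WithOne S)) z n i = slam (fun k => (x k : WithOne S)) z n j

/-- A semigroup is strongly Mal'cev nilpotent if for some `n ≥ 1`, for every `t ≥ 2`,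
`λ_{n,1} = ⋯ = λ_{n,t}` for all `x₁, …, x_t ∈ S` and `z₁, …, z_n ∈ S¹`. -/
def StronglyMalcevNilpotent (S : Type*) [Semigroup S] : Prop :=
  ∃ n : ℕ, 1 ≤ n ∧ SMNAt S n

/-- `y` is an inverse of `x`. -/
def IsInverseOf [Semigroup S] (y x : S) : Prop := x * y * x = x ∧ y * x * y = y

/-- A block group: every element has at most one inverse. -/
def BlockGroup (S : Type*) [Semigroup S] : Prop :=
  ∀ x y₁ y₂ : S, IsInverseOf y₁ x → IsInverseOf y₂ x → y₁ = y₂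

/-- All subgroups (subsemigroups which are groups) of `S` are nilpotent. -/
def AllSubgroupsNilpotent (S : Type*) [Semigroup S] : Prop :=
  ∀ (G : Type) [Group G], ∀ φ : G → S,
    (∀ a b : G, φ (a * b) = φ a * φ b) → Function.Injective φ → Group.IsNilpotent G

/-- All subgroups (subsemigroups which are groups) of `S` are trivial. -/
def AllSubgroupsTrivial (S : Type*) [Semigroup S] : Prop :=
  ∀ (G : Type) [Group G], ∀ φ : G → S,
    (∀ a b : G, φ (a * b) = φ a * φ b) → Function.Injective φ → ∀ g : G, g = 1

end SMN

namespace SMN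

variable {S : Type*}

/-! ### Auxiliary lemmas about `lr` and `slam` -/

theorem lr_zero [Mul S] (x y : S) (z : ℕ → S) : lr x y z 0 = (x, y) := rfl

theorem lr_succ [Mul S] (x y : S) (z : ℕ → S) (n : ℕ) :
    lr x y z (n+1) = ((lr x y z n).1 * z n * (lr x y z n).2,
      (lr x y z n).2 * z n * (lr x y z n).1) := rfl

theorem lr_map {M N : Type*} [Mul M] [Mul N] (f : M → N)
    (hf : ∀ a b, f (a*b) = f a * f b) (x y : M) (z : ℕ → M) (n : ℕ) :
    lr (f x) (f y) (f ∘ z) n = (f (lr x y z n).1, f (lr x y z n).2) := by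
  induction n with
  | zero => rfl
  | succ n ih => rw [lr_succ, lr_succ, ih]; simp [hf, Function.comp]

theorem lr_congr [Mul S] (x y : S) (z z' : ℕ → S) (n : ℕ)
    (h : ∀ k < n, z k = z' k) : lr x y z n = lr x y z' n := by
  induction n with
  | zero => rfl
  | succ n ih =>
    rw [lr_succ, lr_succ, ih (fun k hk => h k (Nat.lt_succ_of_lt hk)),
      h n (Nat.lt_succ_self n)]

theorem slam_two [Mul S] (x : Fin 2 → S) (z : ℕ → S) (n : ℕ) :
    slam x z n 0 = (lr (x 0) (x 1) z n).1 ∧ slam x z n 1 = (lr (x 0) (x 1) z n).2 := by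
  induction n with
  | zero => exact ⟨rfl, rfl⟩
  | succ n ih =>
    have hc0 : cyc (0 : Fin 2) 1 = 1 := rfl
    have hc1 : cyc (1 : Fin 2) 1 = 0 := rfl
    have h0 : slam x z (n+1) 0 = slam x z n 0 * z n * slam x z n 1 := by
      simp only [slam]; norm_num [List.range_succ, hc0]
    have h1 : slam x z (n+1) 1 = slam x z n 1 * z n * slam x z n 0 := by
      simp only [slam]; norm_num [List.range_succ, hc1]
    rw [h0, h1, ih.1, ih.2, lr_succ]
    exact ⟨rfl, rfl⟩

/-- Strong Mal'cev nilpotency at level `n` implies the (binary) Mal'cev identity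
at level `n`. -/
theorem lr_of_SMNAt [Semigroup S] {n : ℕ} (h : SMNAt S n) (x y : S) (z : ℕ → WithOne S) :
    (lr (x : WithOne S) (y : WithOne S) z n).1
      = (lr (x : WithOne S) (y : WithOne S) z n).2 := by
  have h2 := h 2 le_rfl ![x, y] z 0 1
  have hx : (fun k => ((![x, y] k : S) : WithOne S))
      = ![(x : WithOne S), (y : WithOne S)] := by
    funext k; fin_cases k <;> rfl
  rw [hx] at h2
  have hs := slam_two (![(x : WithOne S), (y : WithOne S)]) z n
  rw [hs.1, hs.2] at h2
  simpa using h2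

/-! ### Groups satisfying the Mal'cev identity are nilpotent -/

theorem nilpotent_of_lr_id (n : ℕ) : ∀ (G : Type) [Group G],
    (∀ (x y : G) (z : ℕ → G), (lr x y z n).1 = (lr x y z n).2) → Group.IsNilpotent G := by
  induction n with
  | zero =>
    intro G _ h
    have hsub : ∀ a b : G, a = b := fun a b => h a b (fun _ => 1)
    exact ⟨1, by
      rw [upperCentralSeries_one]
      exact (Subgroup.eq_top_iff' _).mpr fun g =>
        Subgroup.mem_center_iff.mpr fun k => by rw [hsub k g]⟩
  | succ n ih =>
    intro G _ h
    have key : ∀ (x y : G) (z : ℕ → G) (c : G),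
        (lr x y z n).1 * c * (lr x y z n).2 = (lr x y z n).2 * c * (lr x y z n).1 := by
      intro x y z c
      have h1 := h x y (Function.update z n c)
      rw [lr_succ] at h1
      have h2 : lr x y (Function.update z n c) n = lr x y z n :=
        lr_congr _ _ _ _ _ (fun k hk => Function.update_of_ne (Nat.ne_of_lt hk) _ _)
      rw [h2, Function.update_self] at h1
      exact h1
    have hcen : ∀ (x y : G) (z : ℕ → G),
        ((lr x y z n).1)⁻¹ * (lr x y z n).2 ∈ Subgroup.center G := by
      intro x y z
      set l := (lr x y z n).1 with hl
      set r := (lr x y z n).2 with hr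
      have hc := key x y z
      have hcomm : l * r = r * l := by simpa using hc 1
      refine Subgroup.mem_center_iff.mpr fun g => ?_
      have h3 : l * g * r = r * g * l := hc g
      have h5 : r * l⁻¹ = l⁻¹ * r := by
        calc r * l⁻¹ = l⁻¹ * (l * r) * l⁻¹ := by group
        _ = l⁻¹ * (r * l) * l⁻¹ := by rw [hcomm]
        _ = l⁻¹ * r := by group
      have h6 : g * (r * l⁻¹) = (l⁻¹ * r) * g := by
        calc g * (r * l⁻¹) = l⁻¹ * (l * g * r) * l⁻¹ := by group
        _ = l⁻¹ * (r * g * l) * l⁻¹ := by rw [h3]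
        _ = (l⁻¹ * r) * g := by group
      calc g * (l⁻¹ * r) = g * (r * l⁻¹) := by rw [h5]
      _ = (l⁻¹ * r) * g := h6
    have hq : ∀ (x y : G ⧸ Subgroup.center G) (z : ℕ → G ⧸ Subgroup.center G),
        (lr x y z n).1 = (lr x y z n).2 := by
      intro x y z
      obtain ⟨a, rfl⟩ := QuotientGroup.mk'_surjective (Subgroup.center G) x
      obtain ⟨b, rfl⟩ := QuotientGroup.mk'_surjective (Subgroup.center G) y
      choose w hw using fun k => QuotientGroup.mk'_surjective (Subgroup.center G) (z k)
      have hz : z = (QuotientGroup.mk' (Subgroup.center G) : G → G ⧸ Subgroup.center G) ∘ w := by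
        funext k; exact (hw k).symm
      rw [hz, lr_map (QuotientGroup.mk' (Subgroup.center G))
        (fun a b => map_mul _ a b) a b w n]
      exact (QuotientGroup.eq).mpr (hcen a b w)
    exact of_quotient_center_nilpotent (ih _ hq)

/-! ### Pair collapsing lemmas -/

/-- A "right-zero" pair of idempotents must collapse under the Mal'cev identity. -/
theorem eq_of_rz [Semigroup S] {n : ℕ}
    (hid : ∀ (x y : S) (z : ℕ → WithOne S),
      (lr (x : WithOne S) (y : WithOne S) z n).1
        = (lr (x : WithOne S) (y : WithOne S) z n).2)
    {e f : S} (hee : e * e = e) (hff : f * f = f)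
    (hef : e * f = f) (hfe : f * e = e) : e = f := by
  have key : ∀ m, lr (e : WithOne S) (f : WithOne S) (fun _ => (e : WithOne S)) m
      = if Even m then ((e : WithOne S), (f : WithOne S))
        else ((f : WithOne S), (e : WithOne S)) := by
    intro m
    induction m with
    | zero => rw [lr_zero, if_pos Even.zero]
    | succ m ih =>
      rw [lr_succ, ih]
      by_cases hm : Even m
      · have hnext : ¬ Even (m+1) := by simp [Nat.even_add_one, hm]
        rw [if_pos hm, if_neg hnext]
        have c1 : ((e : WithOne S) * e * f) = (f : WithOne S) := by
          rw [← WithOne.coe_mul, ← WithOne.coe_mul, hee, hef]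
        have c2 : ((f : WithOne S) * e * e) = (e : WithOne S) := by
          rw [← WithOne.coe_mul, ← WithOne.coe_mul, hfe, hee]
        exact Prod.ext c1 c2
      · have hnext : Even (m+1) := Nat.even_add_one.mpr hm
        rw [if_neg hm, if_pos hnext]
        have c1 : ((f : WithOne S) * e * e) = (e : WithOne S) := by
          rw [← WithOne.coe_mul, ← WithOne.coe_mul, hfe, hee]
        have c2 : ((e : WithOne S) * e * f) = (f : WithOne S) := by
          rw [← WithOne.coe_mul, ← WithOne.coe_mul, hee, hef]
        exact Prod.ext c1 c2
  have h0 := hid e f (fun _ => (e : WithOne S))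
  rw [key n] at h0
  by_cases hn : Even n
  · rw [if_pos hn] at h0; exact WithOne.coe_inj.mp h0
  · rw [if_neg hn] at h0; exact (WithOne.coe_inj.mp h0).symm

/-- A "left-zero" pair of idempotents must collapse under the Mal'cev identity. -/
theorem eq_of_lz [Semigroup S] {n : ℕ}
    (hid : ∀ (x y : S) (z : ℕ → WithOne S),
      (lr (x : WithOne S) (y : WithOne S) z n).1
        = (lr (x : WithOne S) (y : WithOne S) z n).2)
    {e f : S} (hee : e * e = e) (hff : f * f = f)
    (hef : e * f = e) (hfe : f * e = f) : e = f := by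
  have key : ∀ m, lr (e : WithOne S) (f : WithOne S) (fun _ => (e : WithOne S)) m
      = ((e : WithOne S), (f : WithOne S)) := by
    intro m
    induction m with
    | zero => rfl
    | succ m ih =>
      rw [lr_succ, ih]
      have c1 : ((e : WithOne S) * e * f) = (e : WithOne S) := by
        rw [← WithOne.coe_mul, ← WithOne.coe_mul, hee, hef]
      have c2 : ((f : WithOne S) * e * e) = (f : WithOne S) := by
        rw [← WithOne.coe_mul, ← WithOne.coe_mul, hfe, hfe]
      exact Prod.ext c1 c2
  have h0 := hid e f (fun _ => (e : WithOne S))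
  rw [key n] at h0
  exact WithOne.coe_inj.mp h0

/-! ### Part 1 : Mal'cev identity implies block group + nilpotent subgroups -/

theorem blockGroup_of_id [Semigroup S] {n : ℕ}
    (hid : ∀ (x y : S) (z : ℕ → WithOne S),
      (lr (x : WithOne S) (y : WithOne S) z n).1
        = (lr (x : WithOne S) (y : WithOne S) z n).2) : BlockGroup S := by
  intro x y₁ y₂ h1 h2
  obtain ⟨h1a, h1b⟩ := h1
  obtain ⟨h2a, h2b⟩ := h2
  have ha1' : x * (y₁ * x) = x := by rw [← mul_assoc]; exact h1a
  have ha2' : x * (y₂ * x) = x := by rw [← mul_assoc]; exact h2a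
  -- e = x*y₁, f = x*y₂ form a right-zero pair of idempotents
  have hee : (x*y₁) * (x*y₁) = x*y₁ := by rw [← mul_assoc, h1a]
  have hff : (x*y₂) * (x*y₂) = x*y₂ := by rw [← mul_assoc, h2a]
  have hef : (x*y₁) * (x*y₂) = x*y₂ := by rw [← mul_assoc, h1a]
  have hfe : (x*y₂) * (x*y₁) = x*y₁ := by rw [← mul_assoc, h2a]
  have e1 : x * y₁ = x * y₂ := eq_of_rz hid hee hff hef hfe
  -- g = y₁*x, h = y₂*x form a left-zero pair of idempotents
  have hgg : (y₁*x) * (y₁*x) = y₁*x := by rw [mul_assoc, ha1']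
  have hhh : (y₂*x) * (y₂*x) = y₂*x := by rw [mul_assoc, ha2']
  have hgh : (y₁*x) * (y₂*x) = y₁*x := by rw [mul_assoc, ha2']
  have hhg : (y₂*x) * (y₁*x) = y₂*x := by rw [mul_assoc, ha1']
  have e2 : y₁ * x = y₂ * x := eq_of_lz hid hgg hhh hgh hhg
  calc y₁ = y₁ * x * y₁ := h1b.symm
  _ = y₂ * x * y₁ := by rw [e2]
  _ = y₂ * (x * y₁) := mul_assoc _ _ _
  _ = y₂ * (x * y₂) := by rw [e1]
  _ = y₂ * x * y₂ := (mul_assoc _ _ _).symm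
  _ = y₂ := h2b

theorem allSubgroupsNilpotent_of_id [Semigroup S] {n : ℕ}
    (hid : ∀ (x y : S) (z : ℕ → WithOne S),
      (lr (x : WithOne S) (y : WithOne S) z n).1
        = (lr (x : WithOne S) (y : WithOne S) z n).2) : AllSubgroupsNilpotent S := by
  intro G _ φ hφ hinj
  apply nilpotent_of_lr_id n G
  intro a b w
  set ψ : G → WithOne S := fun g => ((φ g : S) : WithOne S) with hψdef
  have hψ : ∀ u v : G, ψ (u*v) = ψ u * ψ v := by
    intro u v; simp only [hψdef, hφ]; rfl
  have hmap := lr_map ψ hψ a b w n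
  have hid' := hid (φ a) (φ b) (ψ ∘ w)
  have hid'' : (lr (ψ a) (ψ b) (ψ ∘ w) n).1 = (lr (ψ a) (ψ b) (ψ ∘ w) n).2 := hid'
  rw [hmap] at hid''
  exact hinj (WithOne.coe_inj.mp hid'')

/-! ### Part 2 : the counterexample -/

/-- The 7-element inverse monoid consisting of the 2×2 matrix units `a i j`,
the two 2×2 permutation matrices `u` (identity) and `s` (the swap), and zero `o`. -/
inductive T7 : Type
  | u | s | a11 | a12 | a21 | a22 | o
deriving DecidableEq

instance : Fintype SMN.T7 :=
  Fintype.ofList [.u, .s, .a11, .a12, .a21, .a22, .o] (by intro x; cases x <;> simp)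

namespace T7

def mul : T7 → T7 → T7
  | o, _ => o
  | _, o => o
  | u, a => a
  | a, u => a
  | s, s => u
  | s, a11 => a21 | s, a12 => a22 | s, a21 => a11 | s, a22 => a12
  | a11, s => a12 | a12, s => a11 | a21, s => a22 | a22, s => a21
  | a11, a11 => a11 | a11, a12 => a12 | a11, a21 => o | a11, a22 => o
  | a12, a11 => o | a12, a12 => o | a12, a21 => a11 | a12, a22 => a12
  | a21, a11 => a21 | a21, a12 => a22 | a21, a21 => o | a21, a22 => o
  | a22, a11 => o | a22, a12 => o | a22, a21 => a21 | a22, a22 => a22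

instance : Mul T7 := ⟨mul⟩

instance : Semigroup T7 := { mul_assoc := by decide }

instance : Finite T7 := Finite.of_fintype T7

theorem blockGroup : BlockGroup T7 := by
  intro x y₁ y₂ h1 h2
  obtain ⟨h1a, h1b⟩ := h1
  obtain ⟨h2a, h2b⟩ := h2
  revert h1a h1b h2a h2b
  revert x y₁ y₂
  decide

theorem allSubgroupsNilpotent : AllSubgroupsNilpotent T7 := by
  intro G _ φ hφ hinj
  have hsq : ∀ g : G, g * g = 1 := by
    intro g
    apply hinj
    rw [hφ]
    have e_idem : φ 1 * φ 1 = φ 1 := by rw [← hφ, one_mul]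
    have h1 : φ 1 * φ g = φ g := by rw [← hφ, one_mul]
    have h2 : φ g * φ 1 = φ g := by rw [← hφ, mul_one]
    have h3 : φ g * φ g⁻¹ = φ 1 := by rw [← hφ, mul_inv_cancel]
    have h4 : φ g⁻¹ * φ g = φ 1 := by rw [← hφ, inv_mul_cancel]
    have keyT : ∀ e a b : T7, e*e = e → e*a = a → a*e = a → a*b = e → b*a = e →
        a*a = e := by decide
    exact keyT (φ 1) (φ g) (φ g⁻¹) e_idem h1 h2 h3 h4
  have hcomm : ∀ a b : G, a * b = b * a := by
    intro a b
    have ia : a⁻¹ = a := inv_eq_of_mul_eq_one_right (hsq a)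
    have ib : b⁻¹ = b := inv_eq_of_mul_eq_one_right (hsq b)
    have iab : (a*b)⁻¹ = a*b := inv_eq_of_mul_eq_one_right (hsq (a*b))
    calc a * b = (a*b)⁻¹ := iab.symm
    _ = b⁻¹ * a⁻¹ := mul_inv_rev _ _
    _ = b * a := by rw [ia, ib]
  exact ⟨1, by
    rw [upperCentralSeries_one]
    exact (Subgroup.eq_top_iff' _).mpr fun g =>
      Subgroup.mem_center_iff.mpr fun k => hcomm k g⟩

/-- The alternating sequence of `z`'s witnessing failure of the Mal'cev identity. -/
def zf : ℕ → WithOne T7 := fun k => if Even k then (s : WithOne T7) else (u : WithOne T7)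

theorem lr_cycle : ∀ m, lr (a11 : WithOne T7) (a22 : WithOne T7) zf m
    = if Even m then ((a11 : WithOne T7), (a22 : WithOne T7))
      else ((a12 : WithOne T7), (a21 : WithOne T7)) := by
  intro m
  induction m with
  | zero => rw [lr_zero, if_pos Even.zero]
  | succ m ih =>
    rw [lr_succ, ih]
    by_cases hm : Even m
    · have hz : zf m = (s : WithOne T7) := if_pos hm
      have hnext : ¬ Even (m+1) := by simp [Nat.even_add_one, hm]
      rw [if_pos hm, if_neg hnext, hz]
      rfl
    · have hz : zf m = (u : WithOne T7) := if_neg hm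
      have hnext : Even (m+1) := Nat.even_add_one.mpr hm
      rw [if_neg hm, if_pos hnext, hz]
      rfl

theorem not_smn : ¬ StronglyMalcevNilpotent T7 := by
  rintro ⟨n, hn, h⟩
  have hid := lr_of_SMNAt h
  have hcontra := hid a11 a22 zf
  rw [lr_cycle n] at hcontra
  by_cases hn2 : Even n
  · rw [if_pos hn2] at hcontra
    exact absurd (WithOne.coe_inj.mp hcontra) (by decide)
  · rw [if_neg hn2] at hcontra
    exact absurd (WithOne.coe_inj.mp hcontra) (by decide)

end T7

end SMN

namespace SMN


/-- Every finite strongly Mal'cev nilpotent semigroup is a block group all of whose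
subgroups are nilpotent, and the inclusion is strict: some finite block group with all
subgroups nilpotent is not strongly Mal'cev nilpotent. -/
theorem stmt3 :
    (∀ (S : Type) [Semigroup S] [Finite S],
        StronglyMalcevNilpotent S → BlockGroup S ∧ AllSubgroupsNilpotent S) ∧
    ∃ (T : Type) (instT : Semigroup T), Finite T ∧ @BlockGroup T instT ∧
      @AllSubgroupsNilpotent T instT ∧ ¬ @StronglyMalcevNilpotent T instT := by
  constructor
  · intro S _ _ hS
    obtain ⟨n, hn, h⟩ := hS
    have hid := lr_of_SMNAt h
    exact ⟨blockGroup_of_id hid, allSubgroupsNilpotent_of_id hid⟩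
  · exact ⟨T7, inferInstance, inferInstance, T7.blockGroup,
      T7.allSubgroupsNilpotent, T7.not_smn⟩


end SMN
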